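/- arXiv:1911.04078 — 4 statements merged into one kernel-verified Lean document; each statement's English description precedes it below -/
import Mathlib

section
/- Let C_ro and C_up be positive real numbers and let K be a positive natural number with C_up ≤ K · C_ro. Define online(r) = r · C_ro if r < K and online(r) = K · C_ro + C_up if r ≥ K, and define offline(r) = min(r · C_ro, C_up), for every natural number r. Then for every natural number r, online(r) ≤ (1 + K · C_ro / C_up) · offline(r); that is, the memoryless replication algorithm with threshold K is (1 + K · C_ro / C_up)-competitive in Gas cost. -/
theorem memoryless_competitive
    (C_ro C_up : ℝ) (K : ℕ)
    (hro : 0 < C_ro) (hup : 0 < C_up) (hK : 0 < K)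
    (hKC : C_up ≤ (K : ℝ) * C_ro)
    (online offline : ℕ → ℝ)
    (honline : ∀ r : ℕ,
      online r = if r < K then (r : ℝ) * C_ro else (K : ℝ) * C_ro + C_up)
    (hoffline : ∀ r : ℕ, offline r = min ((r : ℝ) * C_ro) C_up) :
    ∀ r : ℕ, online r ≤ (1 + (K : ℝ) * C_ro / C_up) * offline r := by
  intro r
  rw [honline, hoffline]
  have hfac : (1 + (K : ℝ) * C_ro / C_up) * C_up = C_up + (K : ℝ) * C_ro := by
    field_simp
  by_cases h : r < K
  · simp only [h, if_pos]
    by_cases h2 : (r : ℝ) * C_ro ≤ C_up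
    · rw [min_eq_left h2]
      nlinarith [mul_nonneg (Nat.cast_nonneg r) hro.le,
        div_nonneg (mul_nonneg (Nat.cast_nonneg K) hro.le) hup.le]
    · rw [min_eq_right (le_of_not_ge h2), hfac]
      have : (r : ℝ) * C_ro ≤ (K : ℝ) * C_ro := by
        have : (r : ℝ) ≤ (K : ℝ) := by exact_mod_cast h.le
        nlinarith
      linarith
  · simp only [h, if_neg, not_false_iff]
    have hr : (K : ℝ) ≤ (r : ℝ) := by exact_mod_cast Nat.le_of_not_lt h
    have : C_up ≤ (r : ℝ) * C_ro := le_trans hKC (by nlinarith)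
    rw [min_eq_right this, hfac]
    linarith
end

section
/- Let C_ro and C_up be positive real numbers and let K be a positive natural number with C_up = K · C_ro. Define online(r) = r · C_ro if r < K and online(r) = K · C_ro + C_up if r ≥ K, and define offline(r) = min(r · C_ro, C_up), for every natural number r. Then for every finite list rs of natural numbers (each entry representing a write followed by that many reads), the total online cost Σ_{r ∈ rs} online(r) is at most twice the total optimal offline cost Σ_{r ∈ rs} offline(r). -/
theorem memoryless_two_competitive_total
    (C_ro C_up : ℝ) (K : ℕ)
    (hro : 0 < C_ro) (hup : 0 < C_up) (hK : 0 < K)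
    (hKC : C_up = (K : ℝ) * C_ro)
    (online offline : ℕ → ℝ)
    (honline : ∀ r : ℕ,
      online r = if r < K then (r : ℝ) * C_ro else (K : ℝ) * C_ro + C_up)
    (hoffline : ∀ r : ℕ, offline r = min ((r : ℝ) * C_ro) C_up) :
    ∀ rs : List ℕ, (rs.map online).sum ≤ 2 * (rs.map offline).sum := by
  have key : ∀ r : ℕ, online r ≤ 2 * offline r := by
    intro r
    rw [honline, hoffline]
    by_cases h : r < K
    · have hle : (r : ℝ) * C_ro ≤ C_up := by
        rw [hKC]
        exact mul_le_mul_of_nonneg_right (by exact_mod_cast h.le) hro.le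
      rw [if_pos h, min_eq_left hle]
      nlinarith [mul_nonneg (Nat.cast_nonneg r : (0:ℝ) ≤ r) hro.le]
    · push_neg at h
      have hge : C_up ≤ (r : ℝ) * C_ro := by
        rw [hKC]
        exact mul_le_mul_of_nonneg_right (by exact_mod_cast h) hro.le
      rw [if_neg (not_lt.mpr h), min_eq_right hge, ← hKC]
      linarith
  intro rs
  induction rs with
  | nil => simp
  | cons a t ih =>
    simp only [List.map_cons, List.sum_cons, mul_add]
    exact add_le_add (key a) ih
end

section
/- Let K' and D be real numbers with K' > 0 and D ≥ 0. Define the sequences A_1 = D, A_i = 2D + 1 for every i ≥ 2, and B_i = (2D + 1) / K' for every i ≥ 1. Then for every natural number i ≥ 1: (B_1 + … + B_{i−1}) · K' = (A_1 + … + A_i) − D ≤ (A_1 + … + A_i) − D, and (B_1 + … + B_i) · K' = (A_1 + … + A_i) + D + 1 > (A_1 + … + A_i) + D. Hence this sequence of sub-sequences makes the memorizing algorithm flip its replication decision in every sub-sequence. -/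
theorem memorizing_worstcase_sequence_flips
    (K' D : ℝ) (hK' : 0 < K') (hD : 0 ≤ D)
    (A B : ℕ → ℝ)
    (hA1 : A 1 = D)
    (hA : ∀ i : ℕ, 2 ≤ i → A i = 2 * D + 1)
    (hB : ∀ i : ℕ, 1 ≤ i → B i = (2 * D + 1) / K') :
    ∀ i : ℕ, 1 ≤ i →
      ((∑ j ∈ Finset.Icc 1 (i - 1), B j) * K' = (∑ j ∈ Finset.Icc 1 i, A j) - D) ∧
      ((∑ j ∈ Finset.Icc 1 i, B j) * K' = (∑ j ∈ Finset.Icc 1 i, A j) + D + 1) ∧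
      ((∑ j ∈ Finset.Icc 1 i, B j) * K' > (∑ j ∈ Finset.Icc 1 i, A j) + D) := by
  have hK0 : K' ≠ 0 := ne_of_gt hK'
  have hBsum : ∀ i : ℕ, (∑ j ∈ Finset.Icc 1 i, B j) * K' = i * (2 * D + 1) := by
    intro i
    rw [Finset.sum_congr rfl (fun j hj => hB j (Finset.mem_Icc.mp hj).1),
      Finset.sum_const, Nat.card_Icc]
    simp [nsmul_eq_mul]
    field_simp
  have hAsum : ∀ i : ℕ, 1 ≤ i →
      (∑ j ∈ Finset.Icc 1 i, A j) = D + ((i : ℝ) - 1) * (2 * D + 1) := by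
    intro i hi
    induction i with
    | zero => omega
    | succ n ih =>
      rcases Nat.eq_or_lt_of_le hi with h | h
      · simp [← h, hA1]
      · have hn : 1 ≤ n := by omega
        rw [Finset.sum_Icc_succ_top (by omega : 1 ≤ n + 1), ih hn,
          hA (n + 1) (by omega)]
        push_cast
        ring
  intro i hi
  have hi1 : (1 : ℝ) ≤ (i : ℝ) := by exact_mod_cast hi
  have hcast : ((i - 1 : ℕ) : ℝ) = (i : ℝ) - 1 := by
    have := Nat.cast_sub hi (R := ℝ); simpa using this
  refine ⟨?_, ?_, ?_⟩
  · rw [hBsum, hAsum i hi, hcast]; ring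
  · rw [hBsum, hAsum i hi]; ring
  · rw [hBsum, hAsum i hi]; nlinarith
end

section
/- Let K', D, C_ro, C_up be real numbers with K' > 0, D ≥ 0, C_up > 0, and C_ro = C_up / K'. Define A_1 = D, A_i = 2D + 1 for i ≥ 2, and B_i = (2D + 1) / K' for i ≥ 1. Then for every natural number n ≥ 1, the total online cost over the first n sub-sequences, Σ_{i=1}^{n} (A_i · C_ro + B_i · C_up), equals (n · (4D + 2) − (D + 1)) · C_up / K', and in particular is at most ((4D + 2) / K') times the total offline cost n · C_up. -/
theorem memorizing_total_cost
    (K' D C_ro C_up : ℝ)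
    (hK' : 0 < K') (hD : 0 ≤ D) (hup : 0 < C_up)
    (hro : C_ro = C_up / K')
    (A B : ℕ → ℝ)
    (hA1 : A 1 = D)
    (hA : ∀ i : ℕ, 2 ≤ i → A i = 2 * D + 1)
    (hB : ∀ i : ℕ, 1 ≤ i → B i = (2 * D + 1) / K') :
    ∀ n : ℕ, 1 ≤ n →
      ((∑ i ∈ Finset.Icc 1 n, (A i * C_ro + B i * C_up))
          = ((n : ℝ) * (4 * D + 2) - (D + 1)) * C_up / K') ∧
      ((∑ i ∈ Finset.Icc 1 n, (A i * C_ro + B i * C_up))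
          ≤ ((4 * D + 2) / K') * ((n : ℝ) * C_up)) := by
  have hK0 : K' ≠ 0 := ne_of_gt hK'
  have key : ∀ n : ℕ, 1 ≤ n →
      (∑ i ∈ Finset.Icc 1 n, (A i * C_ro + B i * C_up))
        = ((n : ℝ) * (4 * D + 2) - (D + 1)) * C_up / K' := by
    intro n hn
    induction n with
    | zero => omega
    | succ m ih =>
      rcases Nat.eq_or_lt_of_le hn with h | h
      · simp [← h, hA1, hB 1 le_rfl, hro]
        field_simp
        ring
      · have hm : 1 ≤ m := by omega
        rw [Finset.sum_Icc_succ_top (by omega : 1 ≤ m + 1), ih hm,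
          hA (m+1) (by omega), hB (m+1) (by omega)]
        rw [hro]
        push_cast
        field_simp
        ring
  intro n hn
  refine ⟨key n hn, ?_⟩
  rw [key n hn]
  rw [div_le_iff₀ hK']
  have e : (4 * D + 2) / K' * ((n : ℝ) * C_up) * K'
      = (4 * D + 2) * ((n : ℝ) * C_up) := by field_simp
  rw [e]
  have h1 : 0 ≤ (D + 1) * C_up := by positivity
  nlinarith [h1]
end
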